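/- Let G be a finite simple graph that does not contain two disjoint total dominating sets (equivalently, with total domatic number tdom(G) ≤ 1). Then Staller has a winning strategy in the S-game of the Maker–Breaker total domination game on G. -/
import Mathlib


namespace MBTD

variable {V : Type*} [Fintype V] [DecidableEq V]

/-- `a` is a total dominating set of `G`: every vertex has a neighbour in `a`. -/
def IsTotalDomSet (G : SimpleGraph V) (a : Finset V) : Prop :=
  ∀ v : V, ∃ u ∈ a, G.Adj u v

/-- `WinsAux win n turn a b` describes the generic positional game in which two players
alternately claim previously unclaimed vertices until every vertex is claimed.
Here `a` is the set of vertices claimed so far by the tracked player, `b` the set claimed by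
the opponent, `turn = true` iff the tracked player is the next to move, and `n` is the number
of moves still to be played.  The tracked player wins iff `win` holds of the final position. -/
def WinsAux (win : Finset V → Finset V → Prop) : ℕ → Bool → Finset V → Finset V → Prop
  | 0, _, a, b => win a b
  | n + 1, true, a, b => ∃ v ∈ Finset.univ \ (a ∪ b), WinsAux win n false (insert v a) b
  | n + 1, false, a, b => ∀ v ∈ Finset.univ \ (a ∪ b), WinsAux win n true a (insert v b)

/-- Dominator has a winning strategy in the Maker-Breaker total domination game on `G`,
where `dFirst = true` means Dominator moves first (the D-game) and `dFirst = false` means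
Staller moves first (the S-game).  Dominator wins iff the set of vertices he has claimed at
the end of the game is a total dominating set of `G`. -/
def DominatorWinsMBTD (G : SimpleGraph V) (dFirst : Bool) : Prop :=
  WinsAux (fun a _ => IsTotalDomSet G a) (Fintype.card V) dFirst ∅ ∅

/-- Staller has a winning strategy in the Maker-Breaker total domination game on `G`,
where `dFirst = true` means Dominator moves first (the D-game) and `dFirst = false` means
Staller moves first (the S-game).  Staller wins iff she claims every vertex of the open
neighbourhood of some vertex. -/
def StallerWinsMBTD (G : SimpleGraph V) (dFirst : Bool) : Prop :=
  WinsAux (fun a _ => ∃ v : V, ∀ u : V, G.Adj u v → u ∈ a) (Fintype.card V) (!dFirst) ∅ ∅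

/-- `G` is a `𝒟` graph: Dominator wins both the D-game and the S-game. -/
def IsD (G : SimpleGraph V) : Prop :=
  DominatorWinsMBTD G true ∧ DominatorWinsMBTD G false

/-- `G` is an `𝒮` graph: Staller wins both the D-game and the S-game. -/
def IsS (G : SimpleGraph V) : Prop :=
  StallerWinsMBTD G true ∧ StallerWinsMBTD G false

/-- `G` is an `𝒩` graph: whichever player moves first wins. -/
def IsN (G : SimpleGraph V) : Prop :=
  DominatorWinsMBTD G true ∧ StallerWinsMBTD G false

lemma free_insert {s : Finset V} {v : V} (hv : v ∈ Finset.univ \ s) :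
    (Finset.univ \ insert v s).card + 1 = (Finset.univ \ s).card := by
  have h1 : Finset.univ \ insert v s = (Finset.univ \ s).erase v := by
    ext x
    simp only [Finset.mem_sdiff, Finset.mem_insert, Finset.mem_erase, Finset.mem_univ, true_and]
    tauto
  rw [h1, Finset.card_erase_add_one hv]

lemma duality (G : SimpleGraph V) :
    ∀ (n : ℕ) (t : Bool) (a b : Finset V),
      (Finset.univ \ (a ∪ b)).card = n →
      ¬ WinsAux (fun a _ => IsTotalDomSet G a) n t a b →
      WinsAux (fun a _ => ∃ v : V, ∀ u : V, G.Adj u v → u ∈ a) n (!t) b a := by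
  intro n
  induction n with
  | zero =>
    intro t a b hcard hnw
    have huniv : ∀ x : V, x ∈ a ∪ b := by
      have h0 : Finset.univ \ (a ∪ b) = ∅ := Finset.card_eq_zero.mp hcard
      intro x
      by_contra hx
      have : x ∈ Finset.univ \ (a ∪ b) := by simp [hx]
      rw [h0] at this; simp at this
    simp only [WinsAux, IsTotalDomSet] at hnw ⊢
    push_neg at hnw
    obtain ⟨v, hv⟩ := hnw
    refine ⟨v, fun u hu => ?_⟩
    have := huniv u
    rw [Finset.mem_union] at this
    rcases this with h1 | h1
    · exact absurd hu (hv u h1)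
    · exact h1
  | succ n ih =>
    intro t a b hcard hnw
    cases t with
    | true =>
      simp only [WinsAux] at hnw ⊢
      push_neg at hnw
      intro v hv
      have hv' : v ∈ Finset.univ \ (a ∪ b) := by
        simpa [Finset.union_comm] using hv
      have hcard' : (Finset.univ \ (insert v a ∪ b)).card = n := by
        rw [Finset.insert_union]
        have := free_insert hv'
        omega
      exact ih false (insert v a) b hcard' (hnw v hv')
    | false =>
      simp only [WinsAux] at hnw ⊢
      push_neg at hnw
      obtain ⟨v, hv, hnw'⟩ := hnw
      refine ⟨v, by simpa [Finset.union_comm] using hv, ?_⟩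
      have hcard' : (Finset.univ \ (a ∪ insert v b)).card = n := by
        rw [Finset.union_insert]
        have := free_insert hv
        omega
      exact ih true a (insert v b) hcard' hnw'

lemma steal (G : SimpleGraph V)
    (h : ∀ A B : Finset V, IsTotalDomSet G A → IsTotalDomSet G B → ¬ Disjoint A B) :
    ∀ (k : ℕ) (a b : Finset V) (e : V), Disjoint a b → e ∉ a → e ∉ b →
      (Finset.univ \ insert e (a ∪ b)).card = k →
      WinsAux (fun a _ => IsTotalDomSet G a) (k + 1) false a b →
      WinsAux (fun a _ => IsTotalDomSet G a) k true b (insert e a) → False := by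
  intro k
  induction k using Nat.strong_induction_on with
  | _ k ih =>
  intro a b e hab hea heb hcard hS hD
  have hemem : e ∈ Finset.univ \ (a ∪ b) := by simp [hea, heb]
  match k, hcard, hS, hD, ih with
  | 0, hcard, hS, hD, ih =>
    -- board is full after e: Staller's virtual set a is a TDS, Dominator's b is a TDS
    have hA : IsTotalDomSet G a := hS e hemem
    exact h a b hA hD hab
  | (m + 1), hcard, hS, hD, ih =>
    -- Dominator (real) moves: w
    obtain ⟨w, hw, hDw⟩ := hD
    have hwb : w ∉ b := by simp at hw; tauto
    have hwe : w ≠ e := by simp at hw; tauto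
    have hwa : w ∉ a := by simp at hw; tauto
    have hwmem : w ∈ Finset.univ \ (a ∪ b) := by simp [hwa, hwb]
    have hwfree : w ∈ Finset.univ \ insert e (a ∪ b) := by simp [hwa, hwb, hwe]
    -- Staller's virtual strategy responds to w
    have hSw := hS w hwmem
    obtain ⟨v, hv, hSv⟩ := hSw
    have hva : v ∉ a := by simp at hv; tauto
    have hvb : v ∉ b := by simp at hv; tauto
    have hvw : v ≠ w := by simp at hv; tauto
    match m, hcard, hDw, hSv with
    | 0, hcard, hDw, hSv =>
      -- game over: insert v a and insert w b are disjoint TDSs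
      have hdisj : Disjoint (insert v a) (insert w b) := by
        rw [Finset.disjoint_insert_left, Finset.disjoint_insert_right]
        refine ⟨by simp [hvw, hvb], hwa, hab⟩
      exact h _ _ hSv hDw hdisj
    | (m' + 1), hcard, hDw, hSv =>
      by_cases hve : v = e
      · -- Staller virtually plays the extra vertex e; pick a new extra e'
        subst hve
        -- the set of free vertices in the real game
        have hfree : Finset.univ \ (insert w b ∪ insert v a)
            = (Finset.univ \ insert v (a ∪ b)).erase w := by
          ext x
          simp only [Finset.mem_sdiff, Finset.mem_union, Finset.mem_insert, Finset.mem_erase,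
            Finset.mem_univ, true_and]
          tauto
        have hfreecard : (Finset.univ \ (insert w b ∪ insert v a)).card = m' + 1 := by
          rw [hfree, Finset.card_erase_of_mem hwfree, hcard]
          omega
        have hne : (Finset.univ \ (insert w b ∪ insert v a)).Nonempty := by
          rw [← Finset.card_pos, hfreecard]; omega
        obtain ⟨e', he'⟩ := hne
        have he'w : e' ≠ w := by simp at he'; tauto
        have he'b : e' ∉ b := by simp at he'; tauto
        have he'v : e' ≠ v := by simp at he'; tauto
        have he'a : e' ∉ a := by simp at he'; tauto
        have hD' := hDw e' he'
        refine ih m' (by omega) (insert v a) (insert w b) e' ?_ ?_ ?_ ?_ ?_ ?_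
        · rw [Finset.disjoint_insert_left, Finset.disjoint_insert_right]
          exact ⟨by simp [hvw, hvb], hwa, hab⟩
        · simp [he'v, he'a]
        · simp [he'w, he'b]
        · have hset : Finset.univ \ insert e' (insert v a ∪ insert w b)
              = ((Finset.univ \ insert v (a ∪ b)).erase w).erase e' := by
            ext x
            simp only [Finset.mem_sdiff, Finset.mem_union, Finset.mem_insert, Finset.mem_erase,
              Finset.mem_univ, true_and]
            tauto
          have he'mem : e' ∈ (Finset.univ \ insert v (a ∪ b)).erase w := by
            rw [← hfree]; exact he'
          rw [hset, Finset.card_erase_of_mem he'mem, Finset.card_erase_of_mem hwfree, hcard]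
          omega
        · exact hSv
        · exact hD'
      · -- Staller plays v in the real game; the extra vertex stays e
        have hvmem : v ∈ Finset.univ \ (insert w b ∪ insert e a) := by
          simp [hva, hvb, hvw, hve]
        have hD' := hDw v hvmem
        refine ih m' (by omega) (insert v a) (insert w b) e ?_ ?_ ?_ ?_ ?_ ?_
        · rw [Finset.disjoint_insert_left, Finset.disjoint_insert_right]
          exact ⟨by simp [hvw, hvb], hwa, hab⟩
        · simp only [Finset.mem_insert, not_or]
          exact ⟨fun hh => hve hh.symm, hea⟩
        · simp only [Finset.mem_insert, not_or]
          exact ⟨fun hh => hwe hh.symm, heb⟩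
        · have hset : Finset.univ \ insert e (insert v a ∪ insert w b)
              = ((Finset.univ \ insert e (a ∪ b)).erase w).erase v := by
            ext x
            simp only [Finset.mem_sdiff, Finset.mem_union, Finset.mem_insert, Finset.mem_erase,
              Finset.mem_univ, true_and]
            tauto
          have hvfree : v ∈ (Finset.univ \ insert e (a ∪ b)).erase w := by
            simp [hvw, hve, hva, hvb]
          have hwfree' : w ∈ Finset.univ \ insert e (a ∪ b) := hwfree
          rw [hset, Finset.card_erase_of_mem hvfree, Finset.card_erase_of_mem hwfree', hcard]
          omega
        · exact hSv
        · have heq : insert v (insert e a) = insert e (insert v a) := Finset.insert_comm _ _ _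
          rw [heq] at hD'
          exact hD'

/-- if `G` has no two disjoint total dominating sets (total domatic number at
most `1`), then Staller wins the S-game of the MBTD game on `G`. -/
theorem stmt7 {V : Type*} [Fintype V] [DecidableEq V] (G : SimpleGraph V)
    (h : ∀ A B : Finset V, IsTotalDomSet G A → IsTotalDomSet G B → ¬ Disjoint A B) :
    StallerWinsMBTD G false := by
  by_contra hcon
  have hD : WinsAux (fun a _ => IsTotalDomSet G a) (Fintype.card V) false ∅ ∅ := by
    by_contra hnd
    apply hcon
    have := duality G (Fintype.card V) false ∅ ∅ (by simp) hnd
    simpa [StallerWinsMBTD] using this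
  rcases Nat.eq_zero_or_pos (Fintype.card V) with h0 | hpos
  · have hemp : IsEmpty V := Fintype.card_eq_zero_iff.mp h0
    have hF : IsTotalDomSet G (∅ : Finset V) := fun v => (hemp.false v).elim
    exact h ∅ ∅ hF hF (by simp)
  · obtain ⟨v0⟩ : Nonempty V := Fintype.card_pos_iff.mp hpos
    obtain ⟨m, hm⟩ : ∃ m, Fintype.card V = m + 1 :=
      ⟨Fintype.card V - 1, by omega⟩
    rw [hm] at hD
    have hDv0 : WinsAux (fun a _ => IsTotalDomSet G a) m true ∅ (insert v0 ∅) :=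
      hD v0 (by simp)
    refine steal G h m ∅ ∅ v0 (by simp) (by simp) (by simp) ?_ hD hDv0
    have : (Finset.univ \ insert v0 ((∅ : Finset V) ∪ ∅)).card + 1 = Fintype.card V := by
      have := free_insert (s := ((∅ : Finset V) ∪ ∅)) (v := v0) (by simp)
      simpa using this
    omega

end MBTD
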